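/- Let s > 2 be an integer and S⁻ = { ∑_{n≥1} (-1)^n α_n / s^{α_1+...+α_n} : α_n ∈ {1,...,s-1} }. For digits c_1,...,c_n ∈ {1,...,s-1}, the cylinder Δ⁻_{c_1...c_n} (the set of elements of S⁻ whose first n digits are c_1,...,c_n) has diameter d(Δ⁻_{c_1...c_n}) = (s^{s-1} − s² + 2) / ((s^s − 1) · s^{c_1+...+c_n}). -/

import Mathlib

/-- The set `S⁻` of sums `∑ (-1)ⁿ αₙ / s^(α₁+⋯+αₙ)` over digit sequences with values in
`{1,…,s-1}` (the `n`-th term, counting from `1`, carries sign `(-1)ⁿ`). -/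
def Sneg (s : ℕ) : Set ℝ :=
  {x : ℝ | ∃ α : ℕ → ℕ, (∀ n, 1 ≤ α n ∧ α n ≤ s - 1) ∧
    x = ∑' n : ℕ, (-1 : ℝ) ^ (n + 1) * (α n : ℝ) / (s : ℝ) ^ (∑ k ∈ Finset.range (n + 1), α k)}

/-- The cylinder `Δ⁻_{c₁…cₙ}` of rank `n` of `S⁻`: the image of `Sneg s` under the affine map
`y ↦ ∑_{k=1}^n (-1)ᵏ cₖ/s^(c₁+⋯+cₖ) + (-1)ⁿ s^{-(c₁+⋯+cₙ)} · y`. -/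
def cylNeg (s n : ℕ) (c : ℕ → ℕ) : Set ℝ :=
  (fun y : ℝ =>
    (∑ k ∈ Finset.range n,
        (-1 : ℝ) ^ (k + 1) * (c k : ℝ) / (s : ℝ) ^ (∑ j ∈ Finset.range (k + 1), c j)) +
      (-1 : ℝ) ^ n * ((s : ℝ) ^ (∑ k ∈ Finset.range n, c k))⁻¹ * y) '' Sneg s

namespace S11

noncomputable def f (s : ℕ) (α : ℕ → ℕ) (n : ℕ) : ℝ :=
  (-1 : ℝ) ^ (n + 1) * (α n : ℝ) / (s : ℝ) ^ (∑ k ∈ Finset.range (n + 1), α k)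

noncomputable def V (s : ℕ) (α : ℕ → ℕ) : ℝ := ∑' n : ℕ, f s α n

def valid (s : ℕ) (α : ℕ → ℕ) : Prop := ∀ n, 1 ≤ α n ∧ α n ≤ s - 1

variable {s : ℕ}

lemma ht3 (hs : 2 < s) : (3 : ℝ) ≤ (s:ℝ) := by exact_mod_cast hs

lemma sum_ge {α : ℕ → ℕ} (hα : valid s α) (n : ℕ) :
    n + 1 ≤ ∑ k ∈ Finset.range (n + 1), α k := by
  calc n + 1 = ∑ k ∈ Finset.range (n+1), 1 := by simp
  _ ≤ ∑ k ∈ Finset.range (n + 1), α k := Finset.sum_le_sum fun i _ => (hα i).1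

lemma abs_f_le (hs : 2 < s) {α : ℕ → ℕ} (hα : valid s α) (n : ℕ) :
    |f s α n| ≤ ((s:ℝ) - 1) / (s:ℝ) * ((s:ℝ)⁻¹) ^ n := by
  have ht : (3:ℝ) ≤ s := ht3 hs
  have h0 : (0:ℝ) < s := by linarith
  have h1 : |f s α n| = (α n : ℝ) / (s:ℝ) ^ (∑ k ∈ Finset.range (n + 1), α k) := by
    rw [f, abs_div, abs_mul, abs_pow, abs_neg, abs_one, one_pow, one_mul,
      Nat.abs_cast, abs_pow, Nat.abs_cast]
  rw [h1]
  have hαn : (α n : ℝ) ≤ (s:ℝ) - 1 := by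
    have := (hα n).2
    have h2 : (α n : ℝ) ≤ ((s:ℕ) - 1 : ℕ) := by exact_mod_cast this
    have h3 : ((s - 1 : ℕ) : ℝ) = (s:ℝ) - 1 := by
      have : 1 ≤ s := by omega
      push_cast [Nat.cast_sub this]; ring
    linarith [h2, h3.le]
  have hpow : (s:ℝ) ^ (n+1) ≤ (s:ℝ) ^ (∑ k ∈ Finset.range (n + 1), α k) :=
    pow_le_pow_right₀ (by linarith) (sum_ge hα n)
  have hp1 : (0:ℝ) < (s:ℝ) ^ (n+1) := by positivity
  have hp2 : (0:ℝ) < (s:ℝ) ^ (∑ k ∈ Finset.range (n + 1), α k) := by positivity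
  calc (α n : ℝ) / (s:ℝ) ^ (∑ k ∈ Finset.range (n + 1), α k)
      ≤ ((s:ℝ) - 1) / (s:ℝ) ^ (n+1) := by
        apply div_le_div₀ (by linarith) hαn hp1 hpow
    _ = ((s:ℝ) - 1) / (s:ℝ) * ((s:ℝ)⁻¹) ^ n := by
        have hn : ((s:ℝ)^n) ≠ 0 := by positivity
        rw [pow_succ, inv_pow]
        field_simp

lemma summable_bound (hs : 2 < s) :
    Summable (fun n : ℕ => ((s:ℝ) - 1) / (s:ℝ) * ((s:ℝ)⁻¹) ^ n) := by
  have ht : (3:ℝ) ≤ s := ht3 hs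
  exact (summable_geometric_of_lt_one (by positivity) (by
    rw [inv_lt_one_iff₀]; right; linarith)).mul_left _

lemma summable_f (hs : 2 < s) {α : ℕ → ℕ} (hα : valid s α) : Summable (f s α) := by
  apply Summable.of_norm
  apply Summable.of_nonneg_of_le (fun n => norm_nonneg _) _ (summable_bound hs)
  intro n
  exact abs_f_le hs hα n

lemma tsum_bound (hs : 2 < s) :
    ∑' n : ℕ, ((s:ℝ) - 1) / (s:ℝ) * ((s:ℝ)⁻¹) ^ n = 1 := by
  have ht : (3:ℝ) ≤ s := ht3 hs
  rw [tsum_mul_left, tsum_geometric_of_lt_one (by positivity)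
    (by rw [inv_lt_one_iff₀]; right; linarith)]
  have : (s:ℝ) - 1 ≠ 0 := by linarith
  field_simp

lemma abs_V_le (hs : 2 < s) {α : ℕ → ℕ} (hα : valid s α) : |V s α| ≤ 1 := by
  have h1 : Summable fun n => ‖f s α n‖ := by
    apply Summable.of_nonneg_of_le (fun n => norm_nonneg _) _ (summable_bound hs)
    intro n; exact abs_f_le hs hα n
  calc |V s α| ≤ ∑' n, ‖f s α n‖ := norm_tsum_le_tsum_norm h1
    _ ≤ ∑' n : ℕ, ((s:ℝ) - 1) / (s:ℝ) * ((s:ℝ)⁻¹) ^ n :=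
        Summable.tsum_le_tsum (fun n => abs_f_le hs hα n) h1 (summable_bound hs)
    _ = 1 := tsum_bound hs

/-- the shift recursion -/
lemma V_rec (hs : 2 < s) {α : ℕ → ℕ} (hα : valid s α) :
    V s α = -(((α 0 : ℝ) + V s (fun n => α (n+1))) / (s:ℝ) ^ (α 0)) := by
  have ht : (3:ℝ) ≤ s := ht3 hs
  have hσ : valid s (fun n => α (n+1)) := fun n => hα (n+1)
  have hsum := summable_f hs hα
  have key : ∀ n : ℕ, f s α (n+1) = -(((s:ℝ) ^ (α 0))⁻¹ * f s (fun m => α (m+1)) n) := by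
    intro n
    have hA : ∑ k ∈ Finset.range (n + 2), α k
        = α 0 + ∑ k ∈ Finset.range (n + 1), α (k+1) := by
      rw [Finset.sum_range_succ' α (n+1)]; ring
    rw [f, f, hA, pow_add]
    have hp : ((s:ℝ) ^ (α 0)) ≠ 0 := by positivity
    have hq : ((s:ℝ) ^ (∑ k ∈ Finset.range (n + 1), α (k+1))) ≠ 0 := by positivity
    field_simp
    rw [pow_add]; ring
  have h3 : ∑' n, f s α (n+1) = -(((s:ℝ) ^ (α 0))⁻¹ * V s (fun n => α (n+1))) := by
    rw [tsum_congr key, tsum_neg, tsum_mul_left, V]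
  have h0 : f s α 0 = -((α 0 : ℝ) / (s:ℝ) ^ (α 0)) := by
    rw [f, Finset.sum_range_one]
    push_cast
    ring
  rw [V, Summable.tsum_eq_zero_add hsum, h3, h0]
  have hp : ((s:ℝ) ^ (α 0)) ≠ 0 := by positivity
  field_simp
  all_goals ring
def per (a b : ℕ) : ℕ → ℕ := fun n => if Even n then a else b

lemma per_shift (a b : ℕ) : (fun n => per a b (n+1)) = per b a := by
  funext n
  by_cases h : Even n
  · simp [per, h, Nat.even_add_one]
  · simp [per, h, Nat.even_add_one]

lemma per_valid {a b : ℕ} (ha1 : 1 ≤ a) (ha2 : a ≤ s-1) (hb1 : 1 ≤ b) (hb2 : b ≤ s-1) :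
    valid s (per a b) := by
  intro n
  by_cases h : Even n <;> simp [per, h] <;> omega

lemma V_per (hs : 2 < s) {a b : ℕ} (ha1 : 1 ≤ a) (ha2 : a ≤ s-1) (hb1 : 1 ≤ b) (hb2 : b ≤ s-1) :
    V s (per a b) = ((b:ℝ) - (a:ℝ) * (s:ℝ)^b) / ((s:ℝ)^(a+b) - 1) := by
  have ht := ht3 hs
  have hva : valid s (per a b) := per_valid ha1 ha2 hb1 hb2
  have hvb : valid s (per b a) := per_valid hb1 hb2 ha1 ha2
  have hx := V_rec hs hva
  have hy := V_rec hs hvb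
  rw [per_shift] at hx hy
  have hab0 : per a b 0 = a := by simp [per]
  have hba0 : per b a 0 = b := by simp [per]
  rw [hab0] at hx
  rw [hba0] at hy
  set x := V s (per a b)
  set y := V s (per b a)
  have hpa : (0:ℝ) < (s:ℝ)^a := by positivity
  have hpb : (0:ℝ) < (s:ℝ)^b := by positivity
  have hD : (1:ℝ) < (s:ℝ)^(a+b) := one_lt_pow₀ (by linarith) (by omega)
  have e1 : x * (s:ℝ)^a = -((a:ℝ) + y) := by rw [hx]; field_simp
  have e2 : y * (s:ℝ)^b = -((b:ℝ) + x) := by rw [hy]; field_simp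
  rw [eq_div_iff (by linarith)]
  have hadd : (s:ℝ)^(a+b) = (s:ℝ)^a * (s:ℝ)^b := pow_add _ _ _
  rw [hadd]
  have e3 : x * (s:ℝ)^a * (s:ℝ)^b = -((a:ℝ)+y) * (s:ℝ)^b := by rw [e1]
  linear_combination e3 - e2

noncomputable def MM (s : ℕ) : ℝ := (1 + (s:ℝ) - (s:ℝ)^2) / ((s:ℝ)^s - 1)
noncomputable def mm (s : ℕ) : ℝ := ((s:ℝ) - 1 - (s:ℝ)^(s-1)) / ((s:ℝ)^s - 1)

lemma cast_sub_one (hs : 2 < s) : ((s - 1 : ℕ) : ℝ) = (s:ℝ) - 1 := by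
  have : 1 ≤ s := by omega
  push_cast [Nat.cast_sub this]
  ring

lemma hD_pos (hs : 2 < s) : (1:ℝ) < (s:ℝ)^s := by
  have ht := ht3 hs
  exact one_lt_pow₀ (by linarith) (by omega)

lemma V_M (hs : 2 < s) : V s (per (s-1) 1) = MM s := by
  have ht := ht3 hs
  rw [V_per hs (by omega) (by omega) (by omega) (by omega)]
  rw [MM]
  have h1 : s - 1 + 1 = s := by omega
  rw [h1, cast_sub_one hs]
  ring_nf

lemma V_m (hs : 2 < s) : V s (per 1 (s-1)) = mm s := by
  have ht := ht3 hs
  rw [V_per hs (by omega) (by omega) (by omega) (by omega)]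
  rw [mm]
  have h1 : 1 + (s - 1) = s := by omega
  rw [h1, cast_sub_one hs]
  norm_num
lemma mono_from (g : ℕ → ℝ) (u : ℕ) : ∀ x, u ≤ x →
    (∀ a, u ≤ a → a < x → g a ≤ g (a+1)) → g u ≤ g x := by
  intro x
  induction x with
  | zero =>
    intro h _
    have hu : u = 0 := by omega
    exact le_of_eq (congrArg g hu)
  | succ n ih =>
    intro hux hstep
    rcases Nat.lt_or_ge u (n+1) with h | h
    · have h1 : g u ≤ g n := ih (by omega) (fun a ha hax => hstep a ha (by omega))
      exact le_trans h1 (hstep n (by omega) (by omega))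
    · have hu : u = n+1 := by omega
      exact le_of_eq (congrArg g hu)

lemma concave_min (g : ℕ → ℝ) (hd : ∀ a b : ℕ, a ≤ b → g (b+1) - g b ≤ g (a+1) - g a)
    (u v : ℕ) : ∀ x, u ≤ x → x ≤ v → min (g u) (g v) ≤ g x := by
  suffices h : ∀ k x, u ≤ x → x + k = v → min (g u) (g v) ≤ g x by
    intro x hux hxv; exact h (v - x) x hux (by omega)
  intro k
  induction k with
  | zero =>
    intro x hux hxv
    have hx : x = v := by omega
    rw [hx]; exact min_le_right _ _
  | succ n ih =>
    intro x hux hxv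
    rcases le_or_gt (g (x+1)) (g x) with h | h
    · exact le_trans (ih (x+1) (by omega) (by omega)) h
    · have mono : g u ≤ g x := by
        apply mono_from g u x hux
        intro a hua hax
        have := hd a x (by omega)
        linarith
      exact le_trans (min_le_left _ _) mono

lemma mm_nonpos (hs : 2 < s) : mm s ≤ 0 := by
  have ht := ht3 hs
  have hP : (s:ℝ)^2 ≤ (s:ℝ)^(s-1) := pow_le_pow_right₀ (by linarith) (by omega)
  have hD := hD_pos hs
  rw [mm]
  apply div_nonpos_of_nonpos_of_nonneg _ (by linarith)
  nlinarith

lemma MM_nonpos (hs : 2 < s) : MM s ≤ 0 := by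
  have ht := ht3 hs
  have hD := hD_pos hs
  rw [MM]
  apply div_nonpos_of_nonpos_of_nonneg _ (by linarith)
  nlinarith

lemma keyi (hs : 2 < s) : ∀ a : ℕ, 1 ≤ a → a ≤ s - 1 →
    0 ≤ (a:ℝ) + mm s + MM s * (s:ℝ)^a := by
  have ht := ht3 hs
  have hP : (s:ℝ)^2 ≤ (s:ℝ)^(s-1) := pow_le_pow_right₀ (by linarith) (by omega)
  have hts : (s:ℝ)^s = (s:ℝ)^(s-1) * (s:ℝ) := by rw [← pow_succ]; congr 1; omega
  have hD : (0:ℝ) < (s:ℝ)^s - 1 := by have := hD_pos hs; linarith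
  set g : ℕ → ℝ := fun a => (a:ℝ) + mm s + MM s * (s:ℝ)^a with hg
  have hMneg : MM s ≤ 0 := MM_nonpos hs
  have hd : ∀ a b : ℕ, a ≤ b → g (b+1) - g b ≤ g (a+1) - g a := by
    intro a b hab
    simp only [hg]
    have hpow : (s:ℝ)^a ≤ (s:ℝ)^b := pow_le_pow_right₀ (by linarith) hab
    push_cast
    rw [pow_succ, pow_succ]
    nlinarith [mul_nonneg (mul_nonneg (neg_nonneg.mpr hMneg) (sub_nonneg.mpr hpow))
      (by linarith : (0:ℝ) ≤ (s:ℝ)-1)]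
  have h1 : 0 ≤ g 1 := by
    simp only [hg, pow_one]
    have e : 1 + mm s + MM s * (s:ℝ) =
        ((s:ℝ)^s - 1 + ((s:ℝ) - 1 - (s:ℝ)^(s-1)) + (1+(s:ℝ)-(s:ℝ)^2)*(s:ℝ)) / ((s:ℝ)^s - 1) := by
      rw [mm, MM]; field_simp
      all_goals ring
    push_cast
    rw [e]
    apply div_nonneg _ (by linarith)
    nlinarith
  have h2 : g (s-1) = 0 := by
    simp only [hg]
    rw [cast_sub_one hs, mm, MM]
    have e : (s:ℝ) - 1 + ((s:ℝ) - 1 - (s:ℝ)^(s-1))/((s:ℝ)^s-1)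
        + (1+(s:ℝ)-(s:ℝ)^2)/((s:ℝ)^s-1) * (s:ℝ)^(s-1) =
        (((s:ℝ)-1)*((s:ℝ)^s - 1) + ((s:ℝ) - 1 - (s:ℝ)^(s-1)) + (1+(s:ℝ)-(s:ℝ)^2)*(s:ℝ)^(s-1))
          / ((s:ℝ)^s - 1) := by
      field_simp
      all_goals ring
    rw [e, div_eq_zero_iff]
    left
    rw [hts]; ring
  intro a ha1 ha2
  have hmin := concave_min g hd 1 (s-1) a ha1 ha2
  have : (0:ℝ) ≤ min (g 1) (g (s-1)) := le_min h1 (le_of_eq h2.symm)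
  calc (0:ℝ) ≤ min (g 1) (g (s-1)) := this
    _ ≤ g a := hmin

lemma keyii (hs : 2 < s) : ∀ a : ℕ, 1 ≤ a → a ≤ s - 1 →
    (a:ℝ) + MM s + mm s * (s:ℝ)^a ≤ 0 := by
  have ht := ht3 hs
  have hP : (s:ℝ)^2 ≤ (s:ℝ)^(s-1) := pow_le_pow_right₀ (by linarith) (by omega)
  have hts : (s:ℝ)^s = (s:ℝ)^(s-1) * (s:ℝ) := by rw [← pow_succ]; congr 1; omega
  have hD : (0:ℝ) < (s:ℝ)^s - 1 := by have := hD_pos hs; linarith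
  have hmneg : mm s ≤ 0 := mm_nonpos hs
  have base : (1:ℝ) + MM s + mm s * (s:ℝ) = 0 := by
    rw [mm, MM]
    have e : (1:ℝ) + (1+(s:ℝ)-(s:ℝ)^2)/((s:ℝ)^s-1)
        + ((s:ℝ) - 1 - (s:ℝ)^(s-1))/((s:ℝ)^s-1) * (s:ℝ) =
        (((s:ℝ)^s - 1) + (1+(s:ℝ)-(s:ℝ)^2) + ((s:ℝ) - 1 - (s:ℝ)^(s-1))*(s:ℝ)) / ((s:ℝ)^s - 1) := by
      field_simp
      all_goals ring
    rw [e, div_eq_zero_iff]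
    left
    rw [hts]; ring
  have step : ∀ a : ℕ, 1 ≤ a → (1:ℝ) + mm s * (s:ℝ)^a * ((s:ℝ) - 1) ≤ 0 := by
    intro a ha
    have hta : (s:ℝ) ≤ (s:ℝ)^a := by
      calc (s:ℝ) = (s:ℝ)^1 := (pow_one _).symm
      _ ≤ (s:ℝ)^a := pow_le_pow_right₀ (by linarith) ha
    have h1 : mm s * (s:ℝ)^a * ((s:ℝ)-1) ≤ mm s * (s:ℝ) * ((s:ℝ)-1) := by
      nlinarith [mul_nonneg (mul_nonneg (neg_nonneg.mpr hmneg) (sub_nonneg.mpr hta))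
        (by linarith : (0:ℝ) ≤ (s:ℝ)-1)]
    have h2 : (1:ℝ) + mm s * (s:ℝ) * ((s:ℝ)-1) ≤ 0 := by
      rw [mm]
      have e : (1:ℝ) + ((s:ℝ) - 1 - (s:ℝ)^(s-1))/((s:ℝ)^s-1) * (s:ℝ) * ((s:ℝ)-1) =
          (((s:ℝ)^s - 1) + ((s:ℝ) - 1 - (s:ℝ)^(s-1)) * (s:ℝ) * ((s:ℝ)-1)) / ((s:ℝ)^s - 1) := by
        field_simp
        all_goals ring
      rw [e]
      apply div_nonpos_of_nonpos_of_nonneg _ (by linarith)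
      nlinarith
    linarith
  intro a
  induction a with
  | zero => intro h; omega
  | succ n ih =>
    intro h1 h2
    rcases Nat.lt_or_ge 1 (n+1) with h | h
    · have hn := ih (by omega) (by omega)
      have hstep := step n (by omega)
      push_cast
      push_cast at hn
      rw [pow_succ]
      nlinarith
    · have : n = 0 := by omega
      subst this
      push_cast
      rw [pow_one]
      linarith [base]
lemma abs_MM_le (hs : 2 < s) : |MM s| ≤ 1 := by
  have ht := ht3 hs
  have hP : (s:ℝ)^2 ≤ (s:ℝ)^(s-1) := pow_le_pow_right₀ (by linarith) (by omega)
  have hts : (s:ℝ)^s = (s:ℝ)^(s-1) * (s:ℝ) := by rw [← pow_succ]; congr 1; omega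
  have hD : (0:ℝ) < (s:ℝ)^s - 1 := by have := hD_pos hs; linarith
  rw [MM, abs_div, abs_of_pos hD, div_le_one hD]
  rw [abs_le]
  constructor <;> nlinarith

lemma abs_mm_le (hs : 2 < s) : |mm s| ≤ 1 := by
  have ht := ht3 hs
  have hP : (s:ℝ)^2 ≤ (s:ℝ)^(s-1) := pow_le_pow_right₀ (by linarith) (by omega)
  have hts : (s:ℝ)^s = (s:ℝ)^(s-1) * (s:ℝ) := by rw [← pow_succ]; congr 1; omega
  have hD : (0:ℝ) < (s:ℝ)^s - 1 := by have := hD_pos hs; linarith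
  rw [mm, abs_div, abs_of_pos hD, div_le_one hD]
  rw [abs_le]
  constructor <;> nlinarith

lemma bound_aux (hs : 2 < s) : ∀ k : ℕ, ∀ α : ℕ → ℕ, valid s α →
    V s α ≤ MM s + 2/(s:ℝ)^k ∧ mm s - 2/(s:ℝ)^k ≤ V s α := by
  have ht := ht3 hs
  intro k
  induction k with
  | zero =>
    intro α hα
    have h := abs_V_le hs hα
    have hM := abs_MM_le hs
    have hm := abs_mm_le hs
    rw [abs_le] at h hM hm
    rw [pow_zero]
    constructor <;> [linarith [h.2, hM.1]; linarith [h.1, hm.2]]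
  | succ k ih =>
    intro α hα
    have hσ : valid s (fun n => α (n+1)) := fun n => hα (n+1)
    obtain ⟨ihu, ihl⟩ := ih _ hσ
    have hrec := V_rec hs hα
    have ha1 : 1 ≤ α 0 := (hα 0).1
    have ha2 : α 0 ≤ s - 1 := (hα 0).2
    have hki := keyi hs (α 0) ha1 ha2
    have hkii := keyii hs (α 0) ha1 ha2
    have hpa : (0:ℝ) < (s:ℝ)^(α 0) := by positivity
    have hta : (s:ℝ) ≤ (s:ℝ)^(α 0) := by
      calc (s:ℝ) = (s:ℝ)^1 := (pow_one _).symm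
      _ ≤ (s:ℝ)^(α 0) := pow_le_pow_right₀ (by linarith) ha1
    have h5 : 2/(s:ℝ)^(k+1) * (s:ℝ) ≤ 2/(s:ℝ)^(k+1) * (s:ℝ)^(α 0) :=
      mul_le_mul_of_nonneg_left hta (by positivity)
    have h6 : 2/(s:ℝ)^(k+1) * (s:ℝ) = 2/(s:ℝ)^k := by
      rw [pow_succ]
      field_simp
      all_goals ring
    constructor
    · rw [hrec]
      have e : -((((α 0 : ℕ):ℝ) + V s (fun n => α (n+1)))/(s:ℝ)^(α 0))
          = (-(((α 0 : ℕ):ℝ) + V s (fun n => α (n+1))))/(s:ℝ)^(α 0) := by ring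
      rw [e, div_le_iff₀ hpa]
      nlinarith [ihl, hki, h5, h6]
    · rw [hrec]
      have e : -((((α 0 : ℕ):ℝ) + V s (fun n => α (n+1)))/(s:ℝ)^(α 0))
          = (-(((α 0 : ℕ):ℝ) + V s (fun n => α (n+1))))/(s:ℝ)^(α 0) := by ring
      rw [e, le_div_iff₀ hpa]
      nlinarith [ihu, hkii, h5, h6]

lemma tendsto_aux (hs : 2 < s) (C : ℝ) :
    Filter.Tendsto (fun k : ℕ => C + 2/(s:ℝ)^k) Filter.atTop (nhds C) := by
  have ht := ht3 hs
  have he : (fun k : ℕ => C + 2/(s:ℝ)^k) = fun k : ℕ => C + 2*((s:ℝ)⁻¹)^k := by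
    funext k; rw [div_eq_mul_inv, inv_pow]
  rw [he]
  have h0 : (0:ℝ) ≤ (s:ℝ)⁻¹ := by positivity
  have h1 : (s:ℝ)⁻¹ < 1 := by
    rw [inv_lt_one_iff₀]; right; linarith
  have := ((tendsto_pow_atTop_nhds_zero_of_lt_one h0 h1).const_mul (2:ℝ)).const_add C
  simpa using this

lemma V_le_MM (hs : 2 < s) {α : ℕ → ℕ} (hα : valid s α) : V s α ≤ MM s :=
  ge_of_tendsto' (tendsto_aux hs (MM s)) (fun k => (bound_aux hs k α hα).1)

lemma tendsto_aux' (hs : 2 < s) (C : ℝ) :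
    Filter.Tendsto (fun k : ℕ => C - 2/(s:ℝ)^k) Filter.atTop (nhds C) := by
  have ht := ht3 hs
  have he : (fun k : ℕ => C - 2/(s:ℝ)^k) = fun k : ℕ => C - 2*((s:ℝ)⁻¹)^k := by
    funext k; rw [div_eq_mul_inv, inv_pow]
  rw [he]
  have h0 : (0:ℝ) ≤ (s:ℝ)⁻¹ := by positivity
  have h1 : (s:ℝ)⁻¹ < 1 := by
    rw [inv_lt_one_iff₀]; right; linarith
  have := (((tendsto_pow_atTop_nhds_zero_of_lt_one h0 h1).const_mul (2:ℝ)).const_sub C)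
  simpa using this

lemma mm_le_V (hs : 2 < s) {α : ℕ → ℕ} (hα : valid s α) : mm s ≤ V s α :=
  le_of_tendsto' (tendsto_aux' hs (mm s)) (fun k => (bound_aux hs k α hα).2)

lemma isGreatest_Sneg (hs : 2 < s) : IsGreatest (Sneg s) (MM s) := by
  constructor
  · exact ⟨per (s-1) 1, per_valid (by omega) (by omega) (by omega) (by omega),
      by rw [← V_M hs]; rfl⟩
  · rintro x ⟨α, hα, rfl⟩
    exact V_le_MM hs hα

lemma isLeast_Sneg (hs : 2 < s) : IsLeast (Sneg s) (mm s) := by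
  constructor
  · exact ⟨per 1 (s-1), per_valid (by omega) (by omega) (by omega) (by omega),
      by rw [← V_m hs]; rfl⟩
  · rintro x ⟨α, hα, rfl⟩
    exact mm_le_V hs hα

lemma affine_diff (S : Set ℝ) (Mx mx C e : ℝ) (hM : IsGreatest S Mx) (hm : IsLeast S mx) :
    sSup ((fun y => C + e * y) '' S) - sInf ((fun y => C + e * y) '' S) = |e| * (Mx - mx) := by
  rcases le_or_gt 0 e with he | he
  · have hG : IsGreatest ((fun y => C + e * y) '' S) (C + e * Mx) := by
      refine ⟨⟨Mx, hM.1, rfl⟩, ?_⟩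
      rintro z ⟨y, hy, rfl⟩
      have := hM.2 hy
      dsimp only
      nlinarith [mul_le_mul_of_nonneg_left this he]
    have hL : IsLeast ((fun y => C + e * y) '' S) (C + e * mx) := by
      refine ⟨⟨mx, hm.1, rfl⟩, ?_⟩
      rintro z ⟨y, hy, rfl⟩
      have := hm.2 hy
      dsimp only
      nlinarith [mul_le_mul_of_nonneg_left this he]
    rw [hG.csSup_eq, hL.csInf_eq, abs_of_nonneg he]
    ring
  · have hG : IsGreatest ((fun y => C + e * y) '' S) (C + e * mx) := by
      refine ⟨⟨mx, hm.1, rfl⟩, ?_⟩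
      rintro z ⟨y, hy, rfl⟩
      have := hm.2 hy
      dsimp only
      nlinarith [mul_le_mul_of_nonpos_left this he.le]
    have hL : IsLeast ((fun y => C + e * y) '' S) (C + e * Mx) := by
      refine ⟨⟨Mx, hM.1, rfl⟩, ?_⟩
      rintro z ⟨y, hy, rfl⟩
      have := hM.2 hy
      dsimp only
      nlinarith [mul_le_mul_of_nonpos_left this he.le]
    rw [hG.csSup_eq, hL.csInf_eq, abs_of_neg he]
    ring

end S11


theorem stmt11 (s n : ℕ) (hs : 2 < s) (c : ℕ → ℕ)
    (hc : ∀ k < n, 1 ≤ c k ∧ c k ≤ s - 1) :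
    sSup (cylNeg s n c) - sInf (cylNeg s n c) =
      ((s : ℝ) ^ (s - 1) - (s : ℝ) ^ 2 + 2) /
        (((s : ℝ) ^ s - 1) * (s : ℝ) ^ (∑ k ∈ Finset.range n, c k)) := by
  have ht := S11.ht3 hs
  have hG := S11.isGreatest_Sneg hs
  have hL := S11.isLeast_Sneg hs
  have key := S11.affine_diff (Sneg s) (S11.MM s) (S11.mm s)
    (∑ k ∈ Finset.range n,
        (-1 : ℝ) ^ (k + 1) * (c k : ℝ) / (s : ℝ) ^ (∑ j ∈ Finset.range (k + 1), c j))
    ((-1 : ℝ) ^ n * ((s : ℝ) ^ (∑ k ∈ Finset.range n, c k))⁻¹) hG hL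
  have hcyl : cylNeg s n c =
      (fun y => (∑ k ∈ Finset.range n,
        (-1 : ℝ) ^ (k + 1) * (c k : ℝ) / (s : ℝ) ^ (∑ j ∈ Finset.range (k + 1), c j)) +
        ((-1 : ℝ) ^ n * ((s : ℝ) ^ (∑ k ∈ Finset.range n, c k))⁻¹) * y) '' Sneg s := rfl
  rw [hcyl, key]
  have habs : |(-1 : ℝ) ^ n * ((s : ℝ) ^ (∑ k ∈ Finset.range n, c k))⁻¹|
      = ((s : ℝ) ^ (∑ k ∈ Finset.range n, c k))⁻¹ := by
    rw [abs_mul, abs_pow, abs_neg, abs_one, one_pow, one_mul, abs_inv, abs_pow, Nat.abs_cast]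
  rw [habs, S11.MM, S11.mm]
  have hD : (0:ℝ) < (s:ℝ)^s - 1 := by have := S11.hD_pos hs; linarith
  have hE : (0:ℝ) < (s:ℝ)^(∑ k ∈ Finset.range n, c k) := by positivity
  field_simp
  all_goals ring
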